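/- Let N ≥ 2 be an integer and let M ∈ ℝ^{(N−1)×(N−1)} be the one-dimensional mass matrix with entries M_{mn} = ∫_{−1}^{1} ψ_{n+1}(ξ) ψ_{m+1}(ξ) dξ for 1 ≤ m, n ≤ N−1. Then M is symmetric, and for all 1 ≤ m, n ≤ N−1: M_{nn} = (1/(2n+1))·(1/(2n−1) + 1/(2n+3)); M_{mn} = −1/(√(2n+1)·√(2n+5)·(2n+3)) whenever m = n+2; and M_{mn} = 0 whenever |m − n| ∉ {0, 2}. -/

import Mathlib

noncomputable section

open Polynomial MeasureTheory intervalIntegral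

/-- Legendre polynomials via the standard three-term recurrence,
normalized so that `legendreP m` evaluated at `1` equals `1`. -/
def legendreP : ℕ → Polynomial ℝ
  | 0 => 1
  | 1 => X
  | n + 2 => C ((2 * (n : ℝ) + 3) / ((n : ℝ) + 2)) * (X * legendreP (n + 1))
      - C (((n : ℝ) + 1) / ((n : ℝ) + 2)) * legendreP n

/-- `Lg m ξ = L_m(ξ)`, the Legendre polynomial of degree `m` evaluated at `ξ`. -/
def Lg (m : ℕ) (ξ : ℝ) : ℝ := (legendreP m).eval ξ

/-- `phiF m ξ = φ_m(ξ) = √((2m+1)/2) L_m(ξ)`. -/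
def phiF (m : ℕ) (ξ : ℝ) : ℝ := Real.sqrt ((2 * (m : ℝ) + 1) / 2) * Lg m ξ

/-- `psiF m ξ = ψ_{m+1}(ξ) = (L_{m+1}(ξ) - L_{m-1}(ξ))/√(2(2m+1))`, meaningful for `m ≥ 1`. -/
def psiF (m : ℕ) (ξ : ℝ) : ℝ :=
  (Lg (m + 1) ξ - Lg (m - 1) ξ) / Real.sqrt (2 * (2 * (m : ℝ) + 1))

def dl (m : ℕ) (ξ : ℝ) : ℝ := ((legendreP m).derivative).eval ξ

lemma contLg (n : ℕ) : Continuous (Lg n) := by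
  exact (legendreP n).continuous

lemma hasDerivLg (n : ℕ) (x : ℝ) : HasDerivAt (Lg n) (dl n x) x := by
  exact (legendreP n).hasDerivAt x

lemma legP_eq (n : ℕ) : legendreP (n+2) = C ((2 * (n : ℝ) + 3) / ((n : ℝ) + 2)) * (X * legendreP (n + 1))
      - C (((n : ℝ) + 1) / ((n : ℝ) + 2)) * legendreP n := rfl

lemma Lg_recD (n : ℕ) (x : ℝ) : Lg (n+2) x =
    (2*(n:ℝ)+3)/((n:ℝ)+2) * (x * Lg (n+1) x) - ((n:ℝ)+1)/((n:ℝ)+2) * Lg n x := by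
  simp [Lg, legP_eq n]

lemma Lg_rec (n : ℕ) (x : ℝ) : ((n:ℝ)+2) * Lg (n+2) x =
    (2*(n:ℝ)+3) * (x * Lg (n+1) x) - ((n:ℝ)+1) * Lg n x := by
  have h2 : ((n:ℝ)+2) ≠ 0 := by positivity
  rw [Lg_recD]; field_simp

lemma dl_recD (n : ℕ) (x : ℝ) : dl (n+2) x =
    (2*(n:ℝ)+3)/((n:ℝ)+2) * (Lg (n+1) x + x * dl (n+1) x) - ((n:ℝ)+1)/((n:ℝ)+2) * dl n x := by
  simp [dl, Lg, legP_eq n, derivative_mul]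

lemma dl_rec (n : ℕ) (x : ℝ) : ((n:ℝ)+2) * dl (n+2) x =
    (2*(n:ℝ)+3) * (Lg (n+1) x + x * dl (n+1) x) - ((n:ℝ)+1) * dl n x := by
  have h2 : ((n:ℝ)+2) ≠ 0 := by positivity
  rw [dl_recD]; field_simp

lemma SR (n : ℕ) : ∀ x : ℝ,
    (dl (n+1) x = x * dl n x + ((n:ℝ)+1) * Lg n x) ∧
    (x * dl (n+1) x = dl n x + ((n:ℝ)+1) * Lg (n+1) x) := by
  induction n with
  | zero => intro x; constructor <;> simp [dl, Lg, legendreP]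
  | succ n ih =>
    intro x
    obtain ⟨hs, hr⟩ := ih x
    have h2 : ((n:ℝ)+2) ≠ 0 := by positivity
    have hdl := dl_rec n x
    have hlr := Lg_rec n x
    have hS : dl (n+2) x = x * dl (n+1) x + ((n:ℝ)+2) * Lg (n+1) x := by
      apply mul_left_cancel₀ h2
      push_cast
      linear_combination hdl + ((n:ℝ)+1) * hr
    constructor
    · push_cast; push_cast at hS; linarith [hS]
    · push_cast
      have hR : ((n:ℝ)+2) * (x * dl (n+2) x) =
          ((n:ℝ)+2) * (dl (n+1) x + ((n:ℝ)+2) * Lg (n+2) x) := by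
        linear_combination ((n:ℝ)+2) * x * hS + ((n:ℝ)+2)*(x*hr - hs) - ((n:ℝ)+2)*hlr
      have := mul_left_cancel₀ h2 hR
      linarith [this]

lemma dl_P (n : ℕ) (x : ℝ) : dl (n+2) x = dl n x + (2*(n:ℝ)+3) * Lg (n+1) x := by
  have hs := (SR (n+1) x).1
  have hr := (SR n x).2
  push_cast at hs
  linear_combination hs + hr

lemma Lg_one (n : ℕ) : Lg n 1 = 1 := by
  induction n using Nat.twoStepInduction with
  | zero => simp [Lg, legendreP]
  | one => simp [Lg, legendreP]
  | more n ih1 ih2 =>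
    have h2 : ((n:ℝ)+2) ≠ 0 := by positivity
    apply mul_left_cancel₀ h2
    rw [Lg_rec n 1, ih1, ih2]; ring

lemma Lg_neg_one (n : ℕ) : Lg n (-1) = (-1)^n := by
  induction n using Nat.twoStepInduction with
  | zero => simp [Lg, legendreP]
  | one => simp [Lg, legendreP]
  | more n ih1 ih2 =>
    have h2 : ((n:ℝ)+2) ≠ 0 := by positivity
    apply mul_left_cancel₀ h2
    rw [Lg_rec n (-1), ih1, ih2]
    rw [pow_succ, pow_succ]
    ring

def Jk (k n : ℕ) : ℝ := ∫ x in (-1:ℝ)..1, x^k * Lg n x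
def II (m n : ℕ) : ℝ := ∫ x in (-1:ℝ)..1, Lg m x * Lg n x

lemma int_combo3 (f g h k : ℝ → ℝ) (c d e : ℝ)
    (hg : Continuous g) (hh : Continuous h) (hk : Continuous k)
    (hpt : ∀ x, f x = c * g x + d * h x + e * k x) :
    (∫ x in (-1:ℝ)..1, f x) =
      c * (∫ x in (-1:ℝ)..1, g x) + d * (∫ x in (-1:ℝ)..1, h x)
        + e * (∫ x in (-1:ℝ)..1, k x) := by
  rw [integral_congr (g := fun x => c * g x + d * h x + e * k x) (fun x _ => hpt x)]
  rw [integral_add (f := fun x => c * g x + d * h x) (g := fun x => e * k x) ((((continuous_const.mul hg).add (continuous_const.mul hh)) : Continuous fun x => c * g x + d * h x).intervalIntegrable _ _)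
      ((continuous_const.mul hk : Continuous fun x => e * k x).intervalIntegrable _ _),
    integral_add (f := fun x => c * g x) (g := fun x => d * h x) ((continuous_const.mul hg : Continuous fun x => c * g x).intervalIntegrable _ _)
      ((continuous_const.mul hh : Continuous fun x => d * h x).intervalIntegrable _ _),
    intervalIntegral.integral_const_mul, intervalIntegral.integral_const_mul, intervalIntegral.integral_const_mul]

lemma J0 (n : ℕ) : Jk 0 (n+1) = 0 := by
  have hder : ∀ x ∈ Set.uIcc (-1:ℝ) 1, HasDerivAt (fun x => Lg (n+2) x - Lg n x)
      ((2*(n:ℝ)+3) * (x^0 * Lg (n+1) x)) x := by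
    intro x _
    have h := (hasDerivLg (n+2) x).sub (hasDerivLg n x)
    have he : dl (n+2) x - dl n x = (2*(n:ℝ)+3) * (x^0 * Lg (n+1) x) := by
      rw [dl_P]; ring
    rwa [he] at h
  have hint : IntervalIntegrable (fun x => (2*(n:ℝ)+3) * (x^0 * Lg (n+1) x)) volume (-1) 1 :=
    (continuous_const.mul ((continuous_pow 0).mul (contLg (n+1)))).intervalIntegrable _ _
  have h := integral_eq_sub_of_hasDerivAt hder hint
  rw [intervalIntegral.integral_const_mul] at h
  have hb : (Lg (n+2) 1 - Lg n 1) - (Lg (n+2) (-1) - Lg n (-1)) = 0 := by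
    rw [Lg_one, Lg_one, Lg_neg_one, Lg_neg_one, pow_succ, pow_succ]; ring
  have h3 : (2*(n:ℝ)+3) ≠ 0 := by positivity
  have : (2*(n:ℝ)+3) * Jk 0 (n+1) = 0 := by rw [Jk, h]; exact hb
  exact (mul_eq_zero.mp this).resolve_left h3

lemma ftc (n k : ℕ) : ((k:ℝ)+1) * Jk k (n+2) + (-((k:ℝ)+1)) * Jk k n
    + (2*(n:ℝ)+3) * Jk (k+1) (n+1) = 0 := by
  have hder : ∀ x ∈ Set.uIcc (-1:ℝ) 1, HasDerivAt (fun x => x^(k+1) * (Lg (n+2) x - Lg n x))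
      (((k:ℝ)+1) * (x^k * Lg (n+2) x) + (-((k:ℝ)+1)) * (x^k * Lg n x)
        + (2*(n:ℝ)+3) * (x^(k+1) * Lg (n+1) x)) x := by
    intro x _
    have h : HasDerivAt (fun x => x^(k+1) * (Lg (n+2) x - Lg n x))
        ((↑(k+1) * x ^ (k+1-1)) * (Lg (n+2) x - Lg n x) + x^(k+1) * (dl (n+2) x - dl n x)) x :=
      (hasDerivAt_pow (k+1) x).mul ((hasDerivLg (n+2) x).sub (hasDerivLg n x))
    have he : (↑(k+1) * x ^ (k+1-1)) * (Lg (n+2) x - Lg n x)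
        + x^(k+1) * (dl (n+2) x - dl n x)
        = ((k:ℝ)+1) * (x^k * Lg (n+2) x) + (-((k:ℝ)+1)) * (x^k * Lg n x)
          + (2*(n:ℝ)+3) * (x^(k+1) * Lg (n+1) x) := by
      simp only [Nat.add_sub_cancel]
      push_cast
      rw [dl_P]; ring
    rwa [he] at h
  have hint : IntervalIntegrable (fun x => ((k:ℝ)+1) * (x^k * Lg (n+2) x)
      + (-((k:ℝ)+1)) * (x^k * Lg n x) + (2*(n:ℝ)+3) * (x^(k+1) * Lg (n+1) x)) volume (-1) 1 := by
    apply Continuous.intervalIntegrable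
    exact ((continuous_const.mul ((continuous_pow k).mul (contLg (n+2)))).add
      (continuous_const.mul ((continuous_pow k).mul (contLg n)))).add
      (continuous_const.mul ((continuous_pow (k+1)).mul (contLg (n+1))))
  have h := integral_eq_sub_of_hasDerivAt hder hint
  have hc := int_combo3 _ (fun x => x^k * Lg (n+2) x) (fun x => x^k * Lg n x)
      (fun x => x^(k+1) * Lg (n+1) x) (((k:ℝ)+1)) (-((k:ℝ)+1)) ((2*(n:ℝ)+3))
      ((continuous_pow k).mul (contLg (n+2))) ((continuous_pow k).mul (contLg n))
      ((continuous_pow (k+1)).mul (contLg (n+1))) (fun x => rfl)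
  rw [hc] at h
  have hb : (1:ℝ)^(k+1) * (Lg (n+2) 1 - Lg n 1) - (-1:ℝ)^(k+1) * (Lg (n+2) (-1) - Lg n (-1)) = 0 := by
    rw [Lg_one, Lg_one, Lg_neg_one, Lg_neg_one, pow_succ _ (n+1), pow_succ _ n]; ring
  rw [Jk, Jk, Jk]
  rw [h]; exact hb

lemma Jk_zero : ∀ k n : ℕ, k < n → Jk k n = 0 := by
  intro k
  induction k with
  | zero =>
    intro n hn
    obtain ⟨m, rfl⟩ : ∃ m, n = m + 1 := ⟨n - 1, by omega⟩
    exact J0 m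
  | succ k ih =>
    intro n hn
    obtain ⟨q, rfl⟩ : ∃ q, n = q + 1 := ⟨n - 1, by omega⟩
    have hq : k + 1 ≤ q := by omega
    have h := ftc q k
    rw [ih (q+2) (by omega), ih q (by omega)] at h
    have h3 : (2*(q:ℝ)+3) ≠ 0 := by positivity
    have : (2*(q:ℝ)+3) * Jk (k+1) (q+1) = 0 := by linarith
    exact (mul_eq_zero.mp this).resolve_left h3

lemma natDegree_legP_le (n : ℕ) : (legendreP n).natDegree ≤ n := by
  induction n using Nat.twoStepInduction with
  | zero => simp [legendreP]
  | one => simp [legendreP]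
  | more n ih1 ih2 =>
    rw [legP_eq]
    apply le_trans (natDegree_sub_le _ _)
    apply max_le
    · apply le_trans (natDegree_C_mul_le _ _)
      apply le_trans (natDegree_mul_le)
      simpa using by omega
    · apply le_trans (natDegree_C_mul_le _ _)
      omega

lemma II_lower (m n : ℕ) (h : m < n) : II m n = 0 := by
  have hd : (legendreP m).natDegree < m + 1 := Nat.lt_succ_of_le (natDegree_legP_le m)
  have hrep := Polynomial.as_sum_range' (legendreP m) (m+1) hd
  have hpt : ∀ x : ℝ, Lg m x * Lg n x
      = ∑ i ∈ Finset.range (m+1), (legendreP m).coeff i * (x^i * Lg n x) := by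
    intro x
    have hL : Lg m x = ∑ i ∈ Finset.range (m+1), (legendreP m).coeff i * x^i := by
      rw [Lg]
      conv_lhs => rw [hrep]
      simp [eval_finset_sum, eval_monomial]
    rw [hL, Finset.sum_mul]
    exact Finset.sum_congr rfl fun i _ => by ring
  rw [II, integral_congr (g := fun x => ∑ i ∈ Finset.range (m+1),
      (legendreP m).coeff i * (x^i * Lg n x)) (fun x _ => hpt x)]
  rw [intervalIntegral.integral_finset_sum (f := fun i x => (legendreP m).coeff i * (x^i * Lg n x)) (fun i _ =>
    (continuous_const.mul ((continuous_pow i).mul (contLg n)) : Continuous fun x => (legendreP m).coeff i * (x^i * Lg n x)).intervalIntegrable _ _)]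
  apply Finset.sum_eq_zero
  intro i hi
  rw [intervalIntegral.integral_const_mul,
    show (∫ x in (-1:ℝ)..1, x^i * Lg n x) = Jk i n from rfl,
    Jk_zero i n (by simp only [Finset.mem_range] at hi; omega), mul_zero]

lemma II_symm (m n : ℕ) : II m n = II n m := by
  rw [II, II]
  exact integral_congr fun x _ => mul_comm _ _

lemma II_ne (m n : ℕ) (h : m ≠ n) : II m n = 0 := by
  rcases lt_or_gt_of_ne h with h' | h'
  · exact II_lower m n h'
  · rw [II_symm]; exact II_lower n m h'

lemma int_combo2 (f g h : ℝ → ℝ) (c d : ℝ)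
    (hg : Continuous g) (hh : Continuous h)
    (hpt : ∀ x, f x = c * g x + d * h x) :
    (∫ x in (-1:ℝ)..1, f x) =
      c * (∫ x in (-1:ℝ)..1, g x) + d * (∫ x in (-1:ℝ)..1, h x) := by
  rw [integral_congr (g := fun x => c * g x + d * h x) (fun x _ => hpt x)]
  rw [integral_add (f := fun x => c * g x) (g := fun x => d * h x) ((continuous_const.mul hg : Continuous fun x => c * g x).intervalIntegrable _ _)
      ((continuous_const.mul hh : Continuous fun x => d * h x).intervalIntegrable _ _),
    intervalIntegral.integral_const_mul, intervalIntegral.integral_const_mul]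

lemma II_diag : ∀ n : ℕ, II n n = 2/(2*(n:ℝ)+1) := by
  intro n
  induction n using Nat.twoStepInduction with
  | zero =>
    have : II 0 0 = ∫ x in (-1:ℝ)..1, (1:ℝ) := by
      rw [II]; exact integral_congr fun x _ => by simp [Lg, legendreP]
    rw [this]; simp; norm_num
  | one =>
    have : II 1 1 = ∫ x in (-1:ℝ)..1, x^2 := by
      rw [II]; exact integral_congr fun x _ => by simp [Lg, legendreP]; ring
    rw [this, integral_pow]; norm_num
  | more n ih1 ih2 =>
    have h2 : ((n:ℝ)+2) ≠ 0 := by positivity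
    have h5 : (2*(n:ℝ)+5) ≠ 0 := by positivity
    have e1 : II (n+2) (n+2) =
        ((2*(n:ℝ)+3)/((n:ℝ)+2)) * (∫ x in (-1:ℝ)..1, x * (Lg (n+1) x * Lg (n+2) x))
          + (-(((n:ℝ)+1)/((n:ℝ)+2))) * II n (n+2) := by
      apply int_combo2 (fun x => Lg (n+2) x * Lg (n+2) x)
        (fun x => x * (Lg (n+1) x * Lg (n+2) x)) (fun x => Lg n x * Lg (n+2) x) _ _
        (continuous_id.mul ((contLg (n+1)).mul (contLg (n+2))))
        ((contLg n).mul (contLg (n+2)))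
      intro x
      nth_rewrite 1 [Lg_recD n x]
      ring
    have e2 : (∫ x in (-1:ℝ)..1, x * (Lg (n+1) x * Lg (n+2) x)) =
        (((n:ℝ)+3)/(2*(n:ℝ)+5)) * II (n+1) (n+3)
          + (((n:ℝ)+2)/(2*(n:ℝ)+5)) * II (n+1) (n+1) := by
      apply int_combo2 (fun x => x * (Lg (n+1) x * Lg (n+2) x))
        (fun x => Lg (n+1) x * Lg (n+3) x) (fun x => Lg (n+1) x * Lg (n+1) x) _ _
        ((contLg (n+1)).mul (contLg (n+3)))
        ((contLg (n+1)).mul (contLg (n+1)))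
      intro x
      have h := Lg_rec (n+1) x
      rw [show n+1+2 = n+3 from rfl, show n+1+1 = n+2 from rfl] at h
      push_cast at h
      field_simp
      linear_combination (-(Lg (n+1) x)) * h
    rw [e1, e2, II_ne (n+1) (n+3) (by omega), II_ne n (n+2) (by omega), ih2]
    push_cast
    field_simp
    ring

lemma int4 (a b c d : ℕ) :
    (∫ x in (-1:ℝ)..1, (Lg a x - Lg b x) * (Lg c x - Lg d x))
    = II a c - II a d - (II b c - II b d) := by
  have i1 : IntervalIntegrable (fun x => Lg a x * Lg c x) volume (-1) 1 := (((contLg a).mul (contLg c)).intervalIntegrable (-1:ℝ) 1 (μ := volume))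
  have i2 : IntervalIntegrable (fun x => Lg a x * Lg d x) volume (-1) 1 := (((contLg a).mul (contLg d)).intervalIntegrable (-1:ℝ) 1 (μ := volume))
  have i3 : IntervalIntegrable (fun x => Lg b x * Lg c x) volume (-1) 1 := (((contLg b).mul (contLg c)).intervalIntegrable (-1:ℝ) 1 (μ := volume))
  have i4 : IntervalIntegrable (fun x => Lg b x * Lg d x) volume (-1) 1 := (((contLg b).mul (contLg d)).intervalIntegrable (-1:ℝ) 1 (μ := volume))
  rw [integral_congr (g := fun x => (Lg a x * Lg c x - Lg a x * Lg d x)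
      - (Lg b x * Lg c x - Lg b x * Lg d x)) (fun x _ => by ring)]
  rw [integral_sub (i1.sub i2 : IntervalIntegrable (fun x => Lg a x * Lg c x - Lg a x * Lg d x) volume (-1) 1)
      (i3.sub i4 : IntervalIntegrable (fun x => Lg b x * Lg c x - Lg b x * Lg d x) volume (-1) 1), integral_sub i1 i2, integral_sub i3 i4]
  rfl

lemma psi_int (j i : ℕ) :
    (∫ ξ in (-1:ℝ)..1, psiF (j+1) ξ * psiF (i+1) ξ)
      = (II (j+2) (i+2) - II (j+2) i - (II j (i+2) - II j i))
        / (Real.sqrt (2*(2*(j:ℝ)+3)) * Real.sqrt (2*(2*(i:ℝ)+3))) := by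
  have ej : (2*(2*(j:ℝ)+3)) = 2*(2*((j+1:ℕ):ℝ)+1) := by push_cast; ring
  have ei : (2*(2*(i:ℝ)+3)) = 2*(2*((i+1:ℕ):ℝ)+1) := by push_cast; ring
  have hpt : ∀ ξ : ℝ, psiF (j+1) ξ * psiF (i+1) ξ
      = (1/(Real.sqrt (2*(2*(j:ℝ)+3)) * Real.sqrt (2*(2*(i:ℝ)+3)))) *
        ((Lg (j+2) ξ - Lg j ξ) * (Lg (i+2) ξ - Lg i ξ)) := by
    intro ξ
    rw [ej, ei]
    simp only [psiF, Nat.add_sub_cancel]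
    rw [show j+1+1 = j+2 from rfl, show i+1+1 = i+2 from rfl]
    ring
  rw [integral_congr (fun x _ => hpt x), intervalIntegral.integral_const_mul, int4]
  ring

/-- The 1D mass matrix `M_{mn} = ∫_{-1}^{1} ψ_{n+1} ψ_{m+1}`
(indices `1 ≤ m, n ≤ N-1`, realized by `Fin (N-1)` via `m = (i : ℕ) + 1`)
is symmetric and penta-diagonal with the explicit entries of Lemma 2.1. -/
theorem stmt0 (N : ℕ) (hN : 2 ≤ N)
    (M : Matrix (Fin (N - 1)) (Fin (N - 1)) ℝ)
    (hM : ∀ m n : Fin (N - 1),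
      M m n = ∫ ξ in (-1 : ℝ)..1, psiF ((n : ℕ) + 1) ξ * psiF ((m : ℕ) + 1) ξ) :
    M.IsSymm ∧
    (∀ n : Fin (N - 1),
      M n n = (1 / (2 * (((n : ℕ) : ℝ) + 1) + 1)) *
        (1 / (2 * (((n : ℕ) : ℝ) + 1) - 1) + 1 / (2 * (((n : ℕ) : ℝ) + 1) + 3))) ∧
    (∀ m n : Fin (N - 1), (m : ℕ) = (n : ℕ) + 2 →
      M m n = -(1 / (Real.sqrt (2 * (((n : ℕ) : ℝ) + 1) + 1) *
        Real.sqrt (2 * (((n : ℕ) : ℝ) + 1) + 5) * (2 * (((n : ℕ) : ℝ) + 1) + 3)))) ∧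
    (∀ m n : Fin (N - 1),
      (m : ℕ) ≠ (n : ℕ) → (m : ℕ) ≠ (n : ℕ) + 2 → (n : ℕ) ≠ (m : ℕ) + 2 →
      M m n = 0) := by
  refine ⟨?_, ?_, ?_, ?_⟩
  · ext i j
    rw [Matrix.transpose_apply, hM j i, hM i j]
    exact integral_congr fun x _ => mul_comm _ _
  · intro n
    set i := (n : ℕ)
    rw [hM n n, psi_int i i, II_ne (i+2) i (by omega), II_ne i (i+2) (by omega),
      II_diag (i+2), II_diag i,
      Real.mul_self_sqrt (by positivity : (0:ℝ) ≤ 2*(2*(i:ℝ)+3))]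
    push_cast
    have h1 : 2*(i:ℝ)+1 ≠ 0 := by positivity
    have h3 : 2*(i:ℝ)+3 ≠ 0 := by positivity
    have h5 : 2*(i:ℝ)+5 ≠ 0 := by positivity
    rw [show 2*((i:ℝ)+1)-1 = 2*(i:ℝ)+1 from by ring,
      show 2*((i:ℝ)+1)+1 = 2*(i:ℝ)+3 from by ring,
      show 2*((i:ℝ)+1)+3 = 2*(i:ℝ)+5 from by ring,
      div_eq_iff (by positivity : (2:ℝ)*(2*(i:ℝ)+3) ≠ 0)]
    field_simp
    ring
  · intro m n h
    rw [hM m n, h, psi_int (n:ℕ) ((n:ℕ)+2), II_ne ((n:ℕ)+2) ((n:ℕ)+2+2) (by omega),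
      II_ne (n:ℕ) ((n:ℕ)+2+2) (by omega), II_ne (n:ℕ) ((n:ℕ)+2) (by omega),
      II_diag ((n:ℕ)+2)]
    push_cast
    set x := ((n:ℕ) : ℝ)
    have e3 : 2*(x+1)+1 = 2*x+3 := by ring
    have e7 : 2*(x+1)+5 = 2*x+7 := by ring
    rw [e3, e7]
    rw [show (2:ℝ)*(2*x+3) = 2*(2*x+3) from rfl,
      Real.sqrt_mul (by norm_num : (0:ℝ) ≤ 2) (2*x+3),
      show (2:ℝ)*(2*(x+2)+3) = 2*(2*x+7) from by ring,
      Real.sqrt_mul (by norm_num : (0:ℝ) ≤ 2) (2*x+7)]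
    have hs2 : Real.sqrt 2 * Real.sqrt 2 = 2 := Real.mul_self_sqrt (by norm_num)
    have hA : Real.sqrt (2*x+3) ≠ 0 := by
      refine ne_of_gt (Real.sqrt_pos.mpr ?_); positivity
    have hB : Real.sqrt (2*x+7) ≠ 0 := by
      refine ne_of_gt (Real.sqrt_pos.mpr ?_); positivity
    have h5 : 2*x+5 ≠ 0 := by positivity
    have h2 : Real.sqrt 2 ≠ 0 := by
      refine ne_of_gt (Real.sqrt_pos.mpr ?_); norm_num
    field_simp
    linear_combination (5+x*2)⁻¹ * hs2
  · intro m n h1 h2 h3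
    rw [hM m n, psi_int (n:ℕ) (m:ℕ), II_ne ((n:ℕ)+2) ((m:ℕ)+2) (by omega),
      II_ne ((n:ℕ)+2) (m:ℕ) (by omega), II_ne (n:ℕ) ((m:ℕ)+2) (by omega),
      II_ne (n:ℕ) (m:ℕ) (by omega)]
    simp
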